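/- Let W ⊆ ℝⁿ be convex with nonempty interior and let d ∈ W be a point at which W is locally strictly convex, meaning: there is a supporting hyperplane Π at d with Π ∩ W = {d}. If A is an affine subspace through d with A ∩ W = {d}, then A is contained in some hyperplane supporting W at d. -/

import Mathlib

open RealInnerProductSpace

theorem affine_in_supporting_hyperplane {n : ℕ}
    (W : Set (EuclideanSpace ℝ (Fin n))) (hW : Convex ℝ W)
    (hWint : (interior W).Nonempty) (d : EuclideanSpace ℝ (Fin n)) (hd : d ∈ W)
    (hlsc : ∃ f : EuclideanSpace ℝ (Fin n) →L[ℝ] ℝ, f ≠ 0 ∧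
      (∀ u ∈ W, f u ≤ f d) ∧ {u | f u = f d} ∩ W = {d})
    (A : AffineSubspace ℝ (EuclideanSpace ℝ (Fin n))) (hdA : d ∈ A)
    (hAW : (A : Set (EuclideanSpace ℝ (Fin n))) ∩ W = {d}) :
    ∃ g : EuclideanSpace ℝ (Fin n) →L[ℝ] ℝ, g ≠ 0 ∧
      (A : Set (EuclideanSpace ℝ (Fin n))) ⊆ {u | g u = g d} ∧
      ∀ u ∈ W, g u ≤ g d := by
  obtain ⟨f₀, hf₀ne, hf₀sup, -⟩ := hlsc
  -- d is not in the interior of W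
  have hdint : d ∉ interior W := by
    intro hdint
    obtain ⟨v0, hv0⟩ : ∃ v, f₀ v ≠ 0 := by
      by_contra h
      push_neg at h
      exact hf₀ne (by ext x; simp [h x])
    obtain ⟨v, hv⟩ : ∃ v, 0 < f₀ v := by
      rcases lt_or_gt_of_ne hv0 with h | h
      · exact ⟨-v0, by simpa using h⟩
      · exact ⟨v0, h⟩
    have hcont : ContinuousAt (fun t : ℝ => d + t • v) 0 := by fun_prop
    have hev : ∀ᶠ t : ℝ in nhds 0, d + t • v ∈ interior W := by
      apply hcont.eventually_mem
      simpa using isOpen_interior.mem_nhds hdint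
    obtain ⟨t, htW, ht⟩ :=
      (((hev.filter_mono nhdsWithin_le_nhds).and
        (self_mem_nhdsWithin (s := Set.Ioi (0:ℝ)))).exists)
    have := hf₀sup _ (interior_subset htW)
    simp only [map_add, map_smul, smul_eq_mul] at this
    nlinarith [ht]
  -- A is disjoint from the interior of W
  have hdisj : Disjoint (interior W) (A : Set (EuclideanSpace ℝ (Fin n))) := by
    rw [Set.disjoint_left]
    intro a ha haA
    have : a ∈ ((A : Set (EuclideanSpace ℝ (Fin n))) ∩ W) := ⟨haA, interior_subset ha⟩
    rw [hAW] at this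
    exact hdint (this ▸ ha)
  obtain ⟨g, u, hgu, hug⟩ := geometric_hahn_banach_open hW.interior isOpen_interior
    A.convex hdisj
  -- g w ≤ u for all w ∈ W
  obtain ⟨x, hx⟩ := hWint
  have hWle : ∀ w ∈ W, g w ≤ u := by
    intro w hw
    by_contra h
    push_neg at h
    set c := g x - g w with hc
    have key : ∀ t : ℝ, t ∈ Set.Ioc (0:ℝ) 1 → g w + t * c < u := by
      intro t ht
      have := hgu _ (hW.add_smul_sub_mem_interior hw hx ht)
      simpa [mul_comm] using this
    rcases le_or_gt 0 c with hc0 | hc0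
    · have := key 1 ⟨one_pos, le_refl 1⟩
      nlinarith
    · set t := min 1 ((g w - u) / (2 * (-c))) with htdef
      have ht0 : 0 < t := lt_min one_pos (div_pos (by linarith) (by linarith))
      have ht1 : t ≤ 1 := min_le_left _ _
      have := key t ⟨ht0, ht1⟩
      have h2 : t ≤ (g w - u) / (2 * (-c)) := min_le_right _ _
      rw [le_div_iff₀ (by linarith : (0:ℝ) < 2 * -c)] at h2
      nlinarith
  have hdu : g d = u := le_antisymm (hWle d hd) (hug d hdA)
  refine ⟨g, ?_, ?_, ?_⟩
  · intro h
    subst h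
    have h1 := hug d hdA
    have h2 := hgu x hx
    simp at h1 h2
    linarith
  · intro a haA
    have key : ∀ t : ℝ, u ≤ g d + t * (g a - g d) := by
      intro t
      have hmem : t • (a -ᵥ d) +ᵥ d ∈ A := A.smul_vsub_vadd_mem t haA hdA hdA
      have := hug _ hmem
      simpa [vsub_eq_sub, vadd_eq_add, map_smul, map_sub, smul_eq_mul, mul_sub,
        add_comm] using this
    show g a = g d
    by_contra h
    rcases lt_or_gt_of_ne h with h | h
    · have := key ((u - g d - 1) / (g a - g d))
      rw [div_mul_cancel₀ _ (by linarith)] at this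
      rw [hdu] at this
      linarith
    · have := key ((u - g d - 1) / (g a - g d))
      rw [div_mul_cancel₀ _ (by linarith)] at this
      rw [hdu] at this
      linarith
  · intro w hw
    rw [hdu]
    exact hWle w hw
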